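/- Fix n ≥ 1, 0 < c < 1, and x ∈ ℝ. With N and D as follows: N(z, a) := ∫_{max spec M₁ ≤ −z} e^{−(1−c²) Tr M₁²/2} ( ∫_{max spec M₂ ≥ a} e^{−Tr(M₂ − c M₁)²/2} dM₂ ) dM₁ and D(z) := ∫_{max spec M₁ ≤ −z} e^{−(1−c²) Tr M₁²/2} ( ∫_{H_n} e^{−Tr(M₂ − c M₁)²/2} dM₂ ) dM₁, one has lim_{z→∞} N(z, x + z)/D(z) = 0; i.e., for the n-particle Dyson Brownian motion the conditional probability P(λ_n(t) ≥ x + z | λ_n(0) ≤ −z) tends to 0 as z → ∞. -/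

import Mathlib

open MeasureTheory Filter Topology

noncomputable section

/-- Coordinates for an `n×n` Hermitian matrix: diagonal (real) and strictly
upper-triangular (complex) entries; `volume` on them is the Lebesgue (additive
Haar) measure on the space `H_n` of Hermitian matrices. -/
abbrev HermCoords (n : ℕ) : Type :=
  (Fin n → ℝ) × ({p : Fin n × Fin n // p.1 < p.2} → ℂ)

/-- The Hermitian matrix determined by the coordinates. -/
def matrixOf {n : ℕ} (M : HermCoords n) : Matrix (Fin n) (Fin n) ℂ :=
  fun i j =>
    if h : i < j then M.2 ⟨(i, j), h⟩
    else if h' : j < i then star (M.2 ⟨(j, i), h'⟩)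
    else (M.1 i : ℂ)

/-- Real part of the trace. -/
def reTr {n : ℕ} (A : Matrix (Fin n) (Fin n) ℂ) : ℝ := (Matrix.trace A).re

/-- `max spec M ≤ w` (all eigenvalues of the Hermitian matrix at most `w`). -/
def maxSpecLE {n : ℕ} (M : HermCoords n) (w : ℝ) : Prop :=
  ∀ μ ∈ spectrum ℂ (matrixOf M), μ.re ≤ w

/-- `max spec M ≥ w` (largest eigenvalue at least `w`). -/
def maxSpecGE {n : ℕ} (M : HermCoords n) (w : ℝ) : Prop :=
  ∃ μ ∈ spectrum ℂ (matrixOf M), w ≤ μ.re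

/-- `N(z,a) = ∫_{max spec M₁ ≤ −z} e^{−(1−c²)Tr M₁²/2}
      ∫_{max spec M₂ ≥ a} e^{−Tr(M₂−cM₁)²/2} dM₂ dM₁`. -/
def Nint (n : ℕ) (c z a : ℝ) : ℝ :=
  ∫ M₁ : HermCoords n,
    Set.indicator {M : HermCoords n | maxSpecLE M (-z)}
      (fun M₁ => Real.exp (-(1 - c ^ 2) * reTr (matrixOf M₁ * matrixOf M₁) / 2) *
        ∫ M₂ : HermCoords n,
          Set.indicator {M : HermCoords n | maxSpecGE M a}
            (fun M₂ => Real.exp (-reTr ((matrixOf M₂ - (c : ℂ) • matrixOf M₁) *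
              (matrixOf M₂ - (c : ℂ) • matrixOf M₁)) / 2)) M₂) M₁

/-- `D(z) = ∫_{max spec M₁ ≤ −z} e^{−(1−c²)Tr M₁²/2} ∫_{H_n} e^{−Tr(M₂−cM₁)²/2} dM₂ dM₁`. -/
def Dint (n : ℕ) (c z : ℝ) : ℝ :=
  ∫ M₁ : HermCoords n,
    Set.indicator {M : HermCoords n | maxSpecLE M (-z)}
      (fun M₁ => Real.exp (-(1 - c ^ 2) * reTr (matrixOf M₁ * matrixOf M₁) / 2) *
        ∫ M₂ : HermCoords n,
          Real.exp (-reTr ((matrixOf M₂ - (c : ℂ) • matrixOf M₁) *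
            (matrixOf M₂ - (c : ℂ) • matrixOf M₁)) / 2)) M₁

set_option maxHeartbeats 1000000

namespace Dyson

open Matrix in
lemma _mvtest : True := trivial

open scoped Matrix ComplexOrder

variable {n : ℕ}

lemma matrixOf_isHermitian (M : HermCoords n) : (matrixOf M).IsHermitian := by
  ext i j
  simp only [Matrix.conjTranspose_apply, matrixOf]
  rcases lt_trichotomy i j with h | h | h
  · rw [dif_neg (asymm h), dif_pos h, dif_pos h, star_star]
  · subst h
    rw [dif_neg (lt_irrefl i), dif_neg (lt_irrefl i), Complex.star_def, Complex.conj_ofReal]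
  · rw [dif_pos h, dif_neg (asymm h), dif_pos h]

lemma matrixOf_add (M N : HermCoords n) :
    matrixOf (M + N) = matrixOf M + matrixOf N := by
  ext i j
  simp only [matrixOf, Matrix.add_apply]
  rcases lt_trichotomy i j with h | h | h
  · rw [dif_pos h, dif_pos h, dif_pos h]; rfl
  · subst h
    rw [dif_neg (lt_irrefl i), dif_neg (lt_irrefl i), dif_neg (lt_irrefl i),
      dif_neg (lt_irrefl i), dif_neg (lt_irrefl i), dif_neg (lt_irrefl i)]
    show (((M.1 + N.1) i : ℝ) : ℂ) = _
    rw [Pi.add_apply]; push_cast; rfl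
  · rw [dif_neg (asymm h), dif_pos h, dif_neg (asymm h), dif_pos h,
      dif_neg (asymm h), dif_pos h]
    show star (M.2 ⟨(j,i), h⟩ + N.2 ⟨(j,i), h⟩) = _
    simp [star_add]

lemma matrixOf_smul (c : ℝ) (M : HermCoords n) :
    matrixOf (c • M) = (c : ℂ) • matrixOf M := by
  ext i j
  simp only [matrixOf, Matrix.smul_apply, smul_eq_mul]
  rcases lt_trichotomy i j with h | h | h
  · rw [dif_pos h, dif_pos h]
    show (c • (M.2 ⟨(i,j), h⟩)) = _
    simp [Complex.real_smul]
  · subst h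
    rw [dif_neg (lt_irrefl i), dif_neg (lt_irrefl i), dif_neg (lt_irrefl i),
      dif_neg (lt_irrefl i)]
    show (((c • M.1) i : ℝ) : ℂ) = _
    push_cast; simp
  · rw [dif_neg (asymm h), dif_pos h, dif_neg (asymm h), dif_pos h]
    show star (c • (M.2 ⟨(j,i), h⟩)) = _
    simp [Complex.real_smul, star_mul', Complex.conj_ofReal]

lemma matrixOf_sub (M N : HermCoords n) :
    matrixOf (M - N) = matrixOf M - matrixOf N := by
  have h1 : M - N = M + (-1 : ℝ) • N := by
    ext <;> simp [sub_eq_add_neg]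
  rw [h1, matrixOf_add, matrixOf_smul]
  push_cast
  simp [sub_eq_add_neg]

def eigs (M : HermCoords n) : Fin n → ℝ := (matrixOf_isHermitian M).eigenvalues

lemma spectrum_matrixOf (M : HermCoords n) :
    spectrum ℂ (matrixOf M) = Set.range (fun i => (eigs M i : ℂ)) := by
  conv_lhs => rw [(matrixOf_isHermitian M).spectral_theorem]
  rw [Unitary.conjStarAlgAut_apply, Unitary.spectrum_star_right_conjugate, spectrum_diagonal]
  ext z; simp [Function.comp, eigs]

lemma maxSpecLE_iff (M : HermCoords n) (w : ℝ) :
    maxSpecLE M w ↔ ∀ i, eigs M i ≤ w := by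
  unfold maxSpecLE
  rw [spectrum_matrixOf]
  constructor
  · intro h i; simpa using h _ ⟨i, rfl⟩
  · rintro h μ ⟨i, rfl⟩; simpa using h i

lemma maxSpecGE_iff (M : HermCoords n) (a : ℝ) :
    maxSpecGE M a ↔ ∃ i, a ≤ eigs M i := by
  unfold maxSpecGE
  rw [spectrum_matrixOf]
  constructor
  · rintro ⟨μ, ⟨i, rfl⟩, h⟩; exact ⟨i, by simpa using h⟩
  · rintro ⟨i, h⟩; exact ⟨_, ⟨i, rfl⟩, by simpa using h⟩

lemma star_dotProduct_self (v : Fin n → ℂ) :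
    dotProduct (star v) v = ((∑ j, Complex.normSq (v j) : ℝ) : ℂ) := by
  unfold dotProduct
  push_cast
  refine Finset.sum_congr rfl fun j _ => ?_
  simp [Complex.star_def, mul_comm, Complex.mul_conj]

lemma quad_le_of_eigs (M : HermCoords n) {w : ℝ} (hw : ∀ i, eigs M i ≤ w)
    (v : Fin n → ℂ) :
    (dotProduct (star v) (matrixOf M *ᵥ v)).re ≤ w * ∑ j, Complex.normSq (v j) := by
  set A := matrixOf M with hA_def
  have hA := matrixOf_isHermitian M
  have hUU : (hA.eigenvectorUnitary : Matrix (Fin n) (Fin n) ℂ) *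
      star (hA.eigenvectorUnitary : Matrix (Fin n) (Fin n) ℂ) = 1 :=
    Matrix.mem_unitaryGroup_iff.mp hA.eigenvectorUnitary.2
  have hD : Matrix.diagonal (RCLike.ofReal ∘ fun i => w - hA.eigenvalues i) =
      (w : ℂ) • (1 : Matrix (Fin n) (Fin n) ℂ) -
        Matrix.diagonal (RCLike.ofReal ∘ hA.eigenvalues) := by
    ext i j
    by_cases h : i = j <;> simp [Matrix.diagonal, Matrix.one_apply, h] <;> push_cast <;> ring
  have h1 : (w : ℂ) • (1 : Matrix (Fin n) (Fin n) ℂ) - A =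
      (hA.eigenvectorUnitary : Matrix (Fin n) (Fin n) ℂ) *
        Matrix.diagonal (RCLike.ofReal ∘ fun i => w - hA.eigenvalues i) *
        star (hA.eigenvectorUnitary : Matrix (Fin n) (Fin n) ℂ) := by
    rw [hD, Matrix.mul_sub, Matrix.sub_mul, Matrix.mul_smul, Matrix.mul_one,
      Matrix.smul_mul, hUU]
    congr 1
    have hst := hA.spectral_theorem
    rw [Unitary.conjStarAlgAut_apply] at hst
    exact hst
  have hdiag : (Matrix.diagonal (RCLike.ofReal ∘ fun i => w - hA.eigenvalues i)).PosSemidef :=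
    Matrix.posSemidef_diagonal_iff.mpr fun i => by
      rw [Function.comp_apply]
      exact Complex.zero_le_real.mpr (sub_nonneg.mpr (hw i))
  have hpsd : ((w : ℂ) • (1 : Matrix (Fin n) (Fin n) ℂ) - A).PosSemidef := by
    rw [h1]
    simpa [Matrix.star_eq_conjTranspose] using
      hdiag.mul_mul_conjTranspose_same (hA.eigenvectorUnitary : Matrix (Fin n) (Fin n) ℂ)
  have h2 := hpsd.dotProduct_mulVec_nonneg v
  rw [Matrix.sub_mulVec, Matrix.smul_mulVec, Matrix.one_mulVec,
    dotProduct_sub, dotProduct_smul, star_dotProduct_self] at h2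
  have h2' := (Complex.le_def.mp h2).1
  rw [Complex.zero_re, Complex.sub_re, smul_eq_mul, ← Complex.ofReal_mul,
    Complex.ofReal_re] at h2'
  linarith

lemma exists_unit_eigvec (M : HermCoords n) (i : Fin n) :
    ∃ v : Fin n → ℂ, (∑ j, Complex.normSq (v j)) = 1 ∧
      (dotProduct (star v) (matrixOf M *ᵥ v)).re = eigs M i := by
  have hA := matrixOf_isHermitian M
  set v : Fin n → ℂ := ⇑(hA.eigenvectorBasis i) with hv
  have hsum : (∑ j, Complex.normSq (v j)) = 1 := by
    have hnorm : ‖hA.eigenvectorBasis i‖ = 1 := hA.eigenvectorBasis.orthonormal.1 i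
    rw [EuclideanSpace.norm_eq] at hnorm
    have h1 := Real.sqrt_eq_one.mp hnorm
    rw [← h1]
    refine Finset.sum_congr rfl fun j _ => ?_
    rw [← Complex.sq_norm]
  refine ⟨v, hsum, ?_⟩
  rw [show matrixOf M *ᵥ v = hA.eigenvalues i • v from hA.mulVec_eigenvectorBasis i,
    dotProduct_smul, star_dotProduct_self, hsum]
  show (hA.eigenvalues i • ((1 : ℝ) : ℂ)).re = eigs M i
  simp [Complex.real_smul, eigs]

def maxEig (M : HermCoords n) : ℝ := ⨆ i, eigs M i

lemma le_maxEig [Nonempty (Fin n)] (M : HermCoords n) (i : Fin n) :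
    eigs M i ≤ maxEig M :=
  le_ciSup (Set.Finite.bddAbove (Set.finite_range _)) i

lemma maxEig_le [Nonempty (Fin n)] {M : HermCoords n} {w : ℝ}
    (h : ∀ i, eigs M i ≤ w) : maxEig M ≤ w := ciSup_le h

lemma exists_maxEig [Nonempty (Fin n)] (M : HermCoords n) :
    ∃ i, eigs M i = maxEig M := by
  obtain ⟨i, hi⟩ := Finite.exists_max (eigs M)
  exact ⟨i, le_antisymm (le_maxEig M i) (maxEig_le hi)⟩

lemma maxSpecLE_iff_maxEig [Nonempty (Fin n)] (M : HermCoords n) (w : ℝ) :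
    maxSpecLE M w ↔ maxEig M ≤ w := by
  rw [maxSpecLE_iff]
  exact ⟨fun h => maxEig_le h, fun h i => (le_maxEig M i).trans h⟩

lemma maxSpecGE_iff_maxEig [Nonempty (Fin n)] (M : HermCoords n) (a : ℝ) :
    maxSpecGE M a ↔ a ≤ maxEig M := by
  rw [maxSpecGE_iff]
  constructor
  · rintro ⟨i, hi⟩; exact hi.trans (le_maxEig M i)
  · intro h; obtain ⟨i, hi⟩ := exists_maxEig M; exact ⟨i, hi ▸ h⟩

lemma quad_le_maxEig [Nonempty (Fin n)] (M : HermCoords n) (v : Fin n → ℂ) :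
    (dotProduct (star v) (matrixOf M *ᵥ v)).re ≤ maxEig M * ∑ j, Complex.normSq (v j) :=
  quad_le_of_eigs M (le_maxEig M) v

lemma maxEig_add_le [Nonempty (Fin n)] (P Q : HermCoords n) :
    maxEig (P + Q) ≤ maxEig P + maxEig Q := by
  obtain ⟨i, hi⟩ := exists_maxEig (P + Q)
  obtain ⟨v, hv1, hv2⟩ := exists_unit_eigvec (P + Q) i
  rw [matrixOf_add, Matrix.add_mulVec, dotProduct_add, Complex.add_re] at hv2
  have h1 := quad_le_maxEig P v
  have h2 := quad_le_maxEig Q v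
  rw [hv1, mul_one] at h1 h2
  rw [← hi, ← hv2]
  linarith

lemma maxEig_smul_le [Nonempty (Fin n)] (c : ℝ) (hc : 0 ≤ c) (P : HermCoords n) :
    maxEig (c • P) ≤ c * maxEig P := by
  obtain ⟨i, hi⟩ := exists_maxEig (c • P)
  obtain ⟨v, hv1, hv2⟩ := exists_unit_eigvec (c • P) i
  rw [matrixOf_smul, Matrix.smul_mulVec, dotProduct_smul, smul_eq_mul,
    Complex.re_ofReal_mul] at hv2
  have h1 := quad_le_maxEig P v
  rw [hv1, mul_one] at h1
  rw [← hi, ← hv2]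
  exact mul_le_mul_of_nonneg_left h1 hc

lemma continuous_matrixOf : Continuous (matrixOf : HermCoords n → Matrix (Fin n) (Fin n) ℂ) := by
  apply continuous_matrix
  intro i j
  simp only [matrixOf]
  rcases lt_trichotomy i j with h | h | h
  · simp only [dif_pos h]
    exact (continuous_apply _).comp continuous_snd
  · subst h
    simp only [dif_neg (lt_irrefl i)]
    exact Complex.continuous_ofReal.comp ((continuous_apply i).comp continuous_fst)
  · simp only [dif_neg (asymm h), dif_pos h]
    exact continuous_star.comp ((continuous_apply _).comp continuous_snd)

lemma continuous_quad (v : Fin n → ℂ) :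
    Continuous fun M : HermCoords n =>
      (dotProduct (star v) (matrixOf M *ᵥ v)).re :=
  Complex.continuous_re.comp
    (Continuous.dotProduct continuous_const
      (Continuous.matrix_mulVec continuous_matrixOf continuous_const))

lemma isClosed_setLE (w : ℝ) : IsClosed {M : HermCoords n | maxSpecLE M w} := by
  have hset : {M : HermCoords n | maxSpecLE M w} =
      ⋂ v : Fin n → ℂ, {M : HermCoords n |
        (dotProduct (star v) (matrixOf M *ᵥ v)).re ≤ w * ∑ j, Complex.normSq (v j)} := by
    ext M
    simp only [Set.mem_setOf_eq, Set.mem_iInter, maxSpecLE_iff]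
    constructor
    · intro h v; exact quad_le_of_eigs M h v
    · intro h i
      obtain ⟨v, hv1, hv2⟩ := exists_unit_eigvec M i
      have := h v
      rw [hv1, mul_one, hv2] at this
      exact this
  rw [hset]
  exact isClosed_iInter fun v => isClosed_le (continuous_quad v) continuous_const

lemma measurableSet_setLE (w : ℝ) :
    MeasurableSet {M : HermCoords n | maxSpecLE M w} :=
  (isClosed_setLE w).measurableSet

lemma measurableSet_setGE [Nonempty (Fin n)] (a : ℝ) :
    MeasurableSet {M : HermCoords n | maxSpecGE M a} := by
  have hset : {M : HermCoords n | maxSpecGE M a} =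
      (⋃ k : ℕ, {M : HermCoords n | maxSpecLE M (a - 1 / (k + 1))})ᶜ := by
    ext M
    simp only [Set.mem_setOf_eq, Set.mem_compl_iff, Set.mem_iUnion, maxSpecGE_iff_maxEig,
      maxSpecLE_iff_maxEig, not_exists, not_le]
    constructor
    · intro h k
      have : (0:ℝ) < 1 / (k + 1) := by positivity
      linarith
    · intro h
      by_contra hlt
      push_neg at hlt
      obtain ⟨k, hk⟩ := exists_nat_one_div_lt (sub_pos.mpr hlt)
      have := h k
      have hk' : a - 1 / (↑k + 1) > maxEig M := by linarith
      linarith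
  rw [hset]
  exact (MeasurableSet.iUnion fun k => measurableSet_setLE _).compl
lemma entry_symm (M : HermCoords n) (i j : Fin n) :
    matrixOf M j i = star (matrixOf M i j) := by
  have h := matrixOf_isHermitian M
  calc matrixOf M j i = (matrixOf M)ᴴ j i := by rw [h]
    _ = star (matrixOf M i j) := Matrix.conjTranspose_apply _ _ _

lemma entry_lt (M : HermCoords n) (p : {p : Fin n × Fin n // p.1 < p.2}) :
    matrixOf M p.1.1 p.1.2 = M.2 p := by
  show (if h : p.1.1 < p.1.2 then M.2 ⟨(p.1.1, p.1.2), h⟩ else _) = M.2 p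
  rw [dif_pos p.2]

lemma entry_diag (M : HermCoords n) (i : Fin n) :
    matrixOf M i i = (M.1 i : ℂ) := by
  show (if h : i < i then _ else if h' : i < i then _ else ((M.1 i : ℝ) : ℂ)) = _
  rw [dif_neg (lt_irrefl i), dif_neg (lt_irrefl i)]

lemma reTr_sq (M : HermCoords n) :
    reTr (matrixOf M * matrixOf M) =
      (∑ i, (M.1 i) ^ 2) + 2 * ∑ p, Complex.normSq (M.2 p) := by
  classical
  have htr : Matrix.trace (matrixOf M * matrixOf M) =
      ((∑ i, ∑ j, Complex.normSq (matrixOf M i j) : ℝ) : ℂ) := by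
    rw [Matrix.trace]
    push_cast
    refine Finset.sum_congr rfl fun i _ => ?_
    rw [Matrix.diag_apply, Matrix.mul_apply]
    refine Finset.sum_congr rfl fun j _ => ?_
    rw [entry_symm M i j, Complex.star_def, Complex.mul_conj]
  have hre : reTr (matrixOf M * matrixOf M) = ∑ i, ∑ j, Complex.normSq (matrixOf M i j) := by
    rw [reTr, htr, Complex.ofReal_re]
  rw [hre]
  set F : Fin n × Fin n → ℝ := fun p => Complex.normSq (matrixOf M p.1 p.2) with hF
  have hprod : ∑ i, ∑ j, Complex.normSq (matrixOf M i j) = ∑ p : Fin n × Fin n, F p := by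
    rw [← Finset.sum_product' Finset.univ Finset.univ
      (fun i j => Complex.normSq (matrixOf M i j)), Finset.univ_product_univ]
  have hsplit1 : ∑ p : Fin n × Fin n, F p =
      ∑ p ∈ Finset.univ.filter (fun p : Fin n × Fin n => p.1 < p.2), F p +
      ∑ p ∈ Finset.univ.filter (fun p : Fin n × Fin n => ¬ p.1 < p.2), F p :=
    (Finset.sum_filter_add_sum_filter_not _ _ _).symm
  have hsplit2 : ∑ p ∈ Finset.univ.filter (fun p : Fin n × Fin n => ¬ p.1 < p.2), F p =
      ∑ p ∈ Finset.univ.filter (fun p : Fin n × Fin n => p.2 < p.1), F p +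
      ∑ p ∈ Finset.univ.filter (fun p : Fin n × Fin n => p.1 = p.2), F p := by
    rw [← Finset.sum_filter_add_sum_filter_not
      (Finset.univ.filter (fun p : Fin n × Fin n => ¬ p.1 < p.2))
      (fun p : Fin n × Fin n => p.2 < p.1) F]
    congr 1
    · apply Finset.sum_congr _ (fun _ _ => rfl)
      rw [Finset.filter_filter]
      apply Finset.filter_congr
      intro p _
      constructor
      · rintro ⟨_, h2⟩; exact h2
      · intro h; exact ⟨asymm h, h⟩
    · apply Finset.sum_congr _ (fun _ _ => rfl)
      rw [Finset.filter_filter]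
      apply Finset.filter_congr
      intro p _
      constructor
      · rintro ⟨h1, h2⟩; exact le_antisymm (not_lt.mp h2) (not_lt.mp h1)
      · intro h; exact ⟨by omega, by omega⟩
  have hlt : ∑ p ∈ Finset.univ.filter (fun p : Fin n × Fin n => p.1 < p.2), F p =
      ∑ p : {p : Fin n × Fin n // p.1 < p.2}, Complex.normSq (M.2 p) := by
    rw [Finset.sum_subtype (p := fun p : Fin n × Fin n => p.1 < p.2) _ (fun p => by simp) F]
    exact Finset.sum_congr rfl fun p _ => by rw [hF]; simp only; rw [entry_lt M p]
  have hgt : ∑ p ∈ Finset.univ.filter (fun p : Fin n × Fin n => p.2 < p.1), F p =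
      ∑ p ∈ Finset.univ.filter (fun p : Fin n × Fin n => p.1 < p.2), F p := by
    refine Finset.sum_nbij' (fun p => (p.2, p.1)) (fun p => (p.2, p.1)) ?_ ?_ ?_ ?_ ?_
    · intro p hp; simp at hp ⊢; exact hp
    · intro p hp; simp at hp ⊢; exact hp
    · intro p _; rfl
    · intro p _; rfl
    · intro p hp
      show Complex.normSq (matrixOf M p.1 p.2) = Complex.normSq (matrixOf M p.2 p.1)
      rw [entry_symm M p.2 p.1, Complex.star_def, Complex.normSq_conj]
  have hdiag : ∑ p ∈ Finset.univ.filter (fun p : Fin n × Fin n => p.1 = p.2), F p =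
      ∑ i, (M.1 i) ^ 2 := by
    refine Finset.sum_nbij' (fun p => p.1) (fun i => (i, i)) ?_ ?_ ?_ ?_ ?_
    · intro p _; simp
    · intro i _; simp
    · intro p hp; simp at hp; ext <;> simp [hp]
    · intro i _; rfl
    · intro p hp
      simp only [Finset.mem_filter] at hp
      show Complex.normSq (matrixOf M p.1 p.2) = _
      rw [← hp.2, entry_diag M p.1, Complex.normSq_ofReal, sq]
  rw [hprod, hsplit1, hsplit2, hgt, hlt, hdiag]
  ring
instance hermVolAddRight :
    (volume : Measure (HermCoords n)).IsAddRightInvariant := by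
  rw [Measure.volume_eq_prod]; exact Measure.prod.instIsAddRightInvariant

def qf (M : HermCoords n) : ℝ := reTr (matrixOf M * matrixOf M)

lemma continuous_qf : Continuous (qf : HermCoords n → ℝ) :=
  Complex.continuous_re.comp
    ((continuous_matrixOf.matrix_mul continuous_matrixOf).matrix_trace)

lemma integrable_exp_neg_sq_half {b : ℝ} (hb : 0 < b) :
    Integrable (fun t : ℝ => Real.exp (-b * t ^ 2 / 2)) := by
  have := integrable_exp_neg_mul_sq (show (0:ℝ) < b / 2 by linarith)
  convert this using 2 with t
  ring

lemma integrable_exp_neg_normSq {b : ℝ} (hb : 0 < b) :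
    Integrable (fun z : ℂ => Real.exp (-b * Complex.normSq z)) := by
  have hg : Integrable (fun q : ℝ × ℝ => Real.exp (-b * q.1 ^ 2) * Real.exp (-b * q.2 ^ 2)) := by
    rw [Measure.volume_eq_prod]
    exact (integrable_exp_neg_mul_sq hb).mul_prod (integrable_exp_neg_mul_sq hb)
  have key := (Complex.volume_preserving_equiv_real_prod.integrable_comp
    hg.aestronglyMeasurable).mpr hg
  have : (fun q : ℝ × ℝ => Real.exp (-b * q.1 ^ 2) * Real.exp (-b * q.2 ^ 2)) ∘
      ⇑Complex.measurableEquivRealProd = fun z : ℂ => Real.exp (-b * Complex.normSq z) := by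
    funext z
    simp only [Function.comp_apply, Complex.measurableEquivRealProd,
      Homeomorph.toMeasurableEquiv_coe]
    rw [← Real.exp_add, Complex.normSq_apply]
    congr 1
    show -b * z.re ^ 2 + -b * z.im ^ 2 = _
    ring
  rwa [this] at key

lemma integrable_gauss {b : ℝ} (hb : 0 < b) :
    Integrable (fun M : HermCoords n => Real.exp (-b * qf M / 2)) := by
  have hfun : (fun M : HermCoords n => Real.exp (-b * qf M / 2)) =
      (fun M : HermCoords n =>
        (∏ i, Real.exp (-b * (M.1 i) ^ 2 / 2)) *
        (∏ p, Real.exp (-b * Complex.normSq (M.2 p)))) := by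
    funext M
    rw [← Real.exp_sum, ← Real.exp_sum, ← Real.exp_add]
    congr 1
    have h1 : ∑ x : Fin n, -b * M.1 x ^ 2 / 2 = -b * (∑ i, M.1 i ^ 2) / 2 := by
      rw [Finset.mul_sum, Finset.sum_div]
    have h2 : ∑ p : {p : Fin n × Fin n // p.1 < p.2}, -b * Complex.normSq (M.2 p) =
        -b * ∑ p, Complex.normSq (M.2 p) := by
      rw [Finset.mul_sum]
    rw [qf, reTr_sq M, h1, h2]
    ring
  have h1 : Integrable (fun x : Fin n → ℝ => ∏ i, Real.exp (-b * (x i) ^ 2 / 2)) volume :=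
    Integrable.fintype_prod (f := fun (_ : Fin n) (t : ℝ) => Real.exp (-b * t ^ 2 / 2))
      fun _ => integrable_exp_neg_sq_half hb
  have h2 : Integrable (fun y : {p : Fin n × Fin n // p.1 < p.2} → ℂ =>
      ∏ p, Real.exp (-b * Complex.normSq (y p))) volume :=
    Integrable.fintype_prod
      (f := fun (_ : {p : Fin n × Fin n // p.1 < p.2}) (z : ℂ) => Real.exp (-b * Complex.normSq z))
      fun _ => integrable_exp_neg_normSq hb
  rw [hfun, Measure.volume_eq_prod]
  exact h1.mul_prod h2

lemma integral_gauss_pos {b : ℝ} (hb : 0 < b) :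
    0 < ∫ M : HermCoords n, Real.exp (-b * qf M / 2) := by
  rw [integral_pos_iff_support_of_nonneg_ae
    (Filter.Eventually.of_forall fun M => (Real.exp_pos _).le) (integrable_gauss hb)]
  have hsupp : Function.support (fun M : HermCoords n => Real.exp (-b * qf M / 2)) =
      Set.univ := by
    ext M; simp [Function.support, (Real.exp_pos _).ne']
  rw [hsupp]
  exact isOpen_univ.measure_pos _ Set.univ_nonempty
def gA : HermCoords n → ℝ := fun Y => Real.exp (-qf Y / 2)

lemma gA_nonneg (Y : HermCoords n) : 0 ≤ gA Y := (Real.exp_pos _).le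

lemma continuous_gA : Continuous (gA : HermCoords n → ℝ) :=
  Real.continuous_exp.comp (continuous_qf.neg.div_const 2)

lemma integrable_gA : Integrable (gA (n := n)) := by
  unfold gA
  have h := integrable_gauss (n := n) one_pos
  simpa only [neg_mul, one_mul] using h

lemma gA_eq (c : ℝ) (M₁ M₂ : HermCoords n) :
    Real.exp (-reTr ((matrixOf M₂ - (c : ℂ) • matrixOf M₁) *
      (matrixOf M₂ - (c : ℂ) • matrixOf M₁)) / 2) = gA (M₂ - c • M₁) := by
  show _ = Real.exp (-qf (M₂ - c • M₁) / 2)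
  rw [qf, matrixOf_sub, matrixOf_smul]

lemma integral_gA_pos : 0 < ∫ Y : HermCoords n, gA Y := by
  have h := integral_gauss_pos (n := n) one_pos
  have heq : (fun M : HermCoords n => Real.exp (-1 * qf M / 2)) = gA := by
    funext M; show _ = Real.exp (-qf M / 2); rw [neg_mul, one_mul]
  rwa [heq] at h

lemma inner_full (c : ℝ) (M₁ : HermCoords n) :
    (∫ M₂ : HermCoords n, Real.exp (-reTr ((matrixOf M₂ - (c : ℂ) • matrixOf M₁) *
      (matrixOf M₂ - (c : ℂ) • matrixOf M₁)) / 2)) = ∫ Y : HermCoords n, gA Y := by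
  simp_rw [gA_eq c M₁]
  exact integral_sub_right_eq_self gA (c • M₁)

def tailInt (n : ℕ) (a : ℝ) : ℝ :=
  ∫ Y : HermCoords n, Set.indicator {M : HermCoords n | maxSpecGE M a} gA Y

lemma tailInt_nonneg (a : ℝ) : 0 ≤ tailInt n a :=
  integral_nonneg fun Y => Set.indicator_nonneg (fun Y _ => gA_nonneg Y) Y

lemma integrable_tail [Nonempty (Fin n)] (a : ℝ) :
    Integrable (Set.indicator {M : HermCoords n | maxSpecGE M a} gA) :=
  integrable_gA.indicator (measurableSet_setGE a)

lemma tendsto_tailInt [Nonempty (Fin n)] : Tendsto (tailInt n) atTop (𝓝 0) := by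
  have h0 : (0 : ℝ) = ∫ Y : HermCoords n, (0 : ℝ) := by simp
  rw [h0]
  apply tendsto_integral_filter_of_dominated_convergence (gA : HermCoords n → ℝ)
  · exact Filter.Eventually.of_forall fun a =>
      (continuous_gA.stronglyMeasurable.indicator (measurableSet_setGE a)).aestronglyMeasurable
  · refine Filter.Eventually.of_forall fun a => Filter.Eventually.of_forall fun Y => ?_
    rw [Real.norm_eq_abs, abs_of_nonneg (Set.indicator_nonneg (fun Y _ => gA_nonneg Y) Y)]
    exact Set.indicator_le_self' (fun Y _ => gA_nonneg Y) Y
  · exact integrable_gA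
  · refine Filter.Eventually.of_forall fun Y => ?_
    have hev : ∀ᶠ a in atTop, Set.indicator {M : HermCoords n | maxSpecGE M a} gA Y = 0 := by
      filter_upwards [eventually_gt_atTop (maxEig Y)] with a ha
      apply Set.indicator_of_notMem
      rw [Set.mem_setOf_eq, maxSpecGE_iff_maxEig]
      exact not_le.mpr ha
    exact Tendsto.congr' (hev.mono fun a h => h.symm) tendsto_const_nhds

lemma inner_tail_le [Nonempty (Fin n)] {c z : ℝ} (hc0 : 0 ≤ c) (a : ℝ) (M₁ : HermCoords n)
    (hM₁ : maxSpecLE M₁ (-z)) :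
    (∫ M₂ : HermCoords n,
      Set.indicator {M : HermCoords n | maxSpecGE M a}
        (fun M₂ => Real.exp (-reTr ((matrixOf M₂ - (c : ℂ) • matrixOf M₁) *
          (matrixOf M₂ - (c : ℂ) • matrixOf M₁)) / 2)) M₂) ≤ tailInt n (a + c * z) := by
  have hrw : (fun M₂ : HermCoords n =>
      Set.indicator {M : HermCoords n | maxSpecGE M a}
        (fun M₂ => Real.exp (-reTr ((matrixOf M₂ - (c : ℂ) • matrixOf M₁) *
          (matrixOf M₂ - (c : ℂ) • matrixOf M₁)) / 2)) M₂) =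
      (fun M₂ : HermCoords n =>
        Set.indicator {M : HermCoords n | maxSpecGE M a}
          (fun M₂ => gA (M₂ - c • M₁)) M₂) := by
    classical
    funext M₂
    unfold Set.indicator
    split_ifs with h
    · exact gA_eq c M₁ M₂
    · rfl
  rw [hrw]
  have htrans : (∫ M₂ : HermCoords n,
      Set.indicator {M : HermCoords n | maxSpecGE M a} (fun M₂ => gA (M₂ - c • M₁)) M₂) =
      ∫ Y : HermCoords n,
        Set.indicator {Y : HermCoords n | Y + c • M₁ ∈ {M : HermCoords n | maxSpecGE M a}}
          gA Y := by
    classical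
    rw [← integral_add_right_eq_self (fun M₂ : HermCoords n =>
      Set.indicator {M : HermCoords n | maxSpecGE M a} (fun M₂ => gA (M₂ - c • M₁)) M₂)
      (c • M₁)]
    congr 1
    funext Y
    rw [Set.indicator_apply, Set.indicator_apply]
    simp only [Set.mem_setOf_eq, add_sub_cancel_right]
  rw [htrans, tailInt]
  have hsub : {Y : HermCoords n | Y + c • M₁ ∈ {M : HermCoords n | maxSpecGE M a}} ⊆
      {M : HermCoords n | maxSpecGE M (a + c * z)} := by
    intro Y hY
    rw [Set.mem_setOf_eq, Set.mem_setOf_eq, maxSpecGE_iff_maxEig] at hY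
    rw [Set.mem_setOf_eq, maxSpecGE_iff_maxEig]
    have h1 : maxEig (Y + c • M₁) ≤ maxEig Y + maxEig (c • M₁) := maxEig_add_le Y (c • M₁)
    have h2 : maxEig (c • M₁) ≤ c * maxEig M₁ := maxEig_smul_le c hc0 M₁
    have h3 : maxEig M₁ ≤ -z := (maxSpecLE_iff_maxEig M₁ (-z)).mp hM₁
    nlinarith [mul_le_mul_of_nonneg_left h3 hc0]
  have hmeas : MeasurableSet {Y : HermCoords n | Y + c • M₁ ∈
      {M : HermCoords n | maxSpecGE M a}} :=
    (measurableSet_setGE a).preimage (measurable_add_const (c • M₁))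
  apply integral_mono (integrable_gA.indicator hmeas) (integrable_tail _)
  exact Set.indicator_le_indicator_of_subset hsub (fun Y => gA_nonneg Y)
def eC (c : ℝ) : HermCoords n → ℝ :=
  fun M => Real.exp (-(1 - c ^ 2) * reTr (matrixOf M * matrixOf M) / 2)

lemma eC_nonneg (c : ℝ) (M : HermCoords n) : 0 ≤ eC c M := (Real.exp_pos _).le

lemma integrable_eC {c : ℝ} (hc : c ^ 2 < 1) : Integrable (eC c : HermCoords n → ℝ) :=
  integrable_gauss (show (0:ℝ) < 1 - c ^ 2 by linarith)

def Iz (n : ℕ) (c z : ℝ) : ℝ :=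
  ∫ M₁ : HermCoords n, Set.indicator {M : HermCoords n | maxSpecLE M (-z)} (eC c) M₁

lemma Dint_eq (c z : ℝ) : Dint n c z = (∫ Y : HermCoords n, gA Y) * Iz n c z := by
  classical
  unfold Dint Iz
  have hfun : (fun M₁ : HermCoords n =>
      Set.indicator {M : HermCoords n | maxSpecLE M (-z)}
        (fun M₁ => Real.exp (-(1 - c ^ 2) * reTr (matrixOf M₁ * matrixOf M₁) / 2) *
          ∫ M₂ : HermCoords n,
            Real.exp (-reTr ((matrixOf M₂ - (c : ℂ) • matrixOf M₁) *
              (matrixOf M₂ - (c : ℂ) • matrixOf M₁)) / 2)) M₁) =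
      fun M₁ : HermCoords n => (∫ Y : HermCoords n, gA Y) *
        Set.indicator {M : HermCoords n | maxSpecLE M (-z)} (eC c) M₁ := by
    funext M₁
    rw [Set.indicator_apply, Set.indicator_apply]
    split_ifs with h
    · rw [inner_full c M₁]
      exact mul_comm _ _
    · rw [mul_zero]
  rw [hfun, MeasureTheory.integral_const_mul]

lemma abs_quad_le {δ : ℝ} (hδ : 0 ≤ δ) (P : HermCoords n)
    (hent : ∀ i j, ‖matrixOf P i j‖ ≤ δ) (v : Fin n → ℂ) :
    (dotProduct (star v) (matrixOf P *ᵥ v)).re ≤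
      δ * n * ∑ j, Complex.normSq (v j) := by
  have step1 : (dotProduct (star v) (matrixOf P *ᵥ v)).re ≤
      ∑ i, ‖v i‖ * (δ * ∑ j, ‖v j‖) := by
    refine (Complex.re_le_norm _).trans ?_
    refine (norm_sum_le _ _).trans ?_
    refine Finset.sum_le_sum fun i _ => ?_
    rw [Pi.star_apply, norm_mul]
    have h1 : ‖star (v i)‖ = ‖v i‖ := by
      rw [Complex.star_def, Complex.norm_conj]
    rw [h1]
    refine mul_le_mul_of_nonneg_left ?_ (norm_nonneg _)
    rw [Matrix.mulVec, dotProduct]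
    refine (norm_sum_le _ _).trans ?_
    rw [Finset.mul_sum]
    refine Finset.sum_le_sum fun j _ => ?_
    rw [norm_mul]
    exact mul_le_mul_of_nonneg_right (hent i j) (norm_nonneg _)
  have step2 : ∑ i, ‖v i‖ * (δ * ∑ j, ‖v j‖) =
      δ * (∑ j, ‖v j‖) ^ 2 := by
    rw [← Finset.sum_mul]
    ring
  have step3 : (∑ j, ‖v j‖) ^ 2 ≤ (n : ℝ) * ∑ j, ‖v j‖ ^ 2 := by
    have := Finset.sum_mul_sq_le_sq_mul_sq Finset.univ (fun _ : Fin n => (1 : ℝ))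
      (fun j => ‖v j‖)
    simpa using this
  have step4 : ∑ j, ‖v j‖ ^ 2 = ∑ j, Complex.normSq (v j) :=
    Finset.sum_congr rfl fun j _ => Complex.sq_norm (v j)
  calc (dotProduct (star v) (matrixOf P *ᵥ v)).re ≤
      δ * (∑ j, ‖v j‖) ^ 2 := by rw [← step2]; exact step1
    _ ≤ δ * ((n : ℝ) * ∑ j, Complex.normSq (v j)) := by
        rw [← step4]; exact mul_le_mul_of_nonneg_left step3 hδ
    _ = δ * n * ∑ j, Complex.normSq (v j) := by ring

lemma Iz_pos [Nonempty (Fin n)] {c : ℝ} (hc : c ^ 2 < 1) (z : ℝ) : 0 < Iz n c z := by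
  classical
  set δ : ℝ := 1 / (n + 1) with hδdef
  have hδpos : 0 < δ := by positivity
  set M₀ : HermCoords n := (fun _ => -(z + 1), fun _ => 0) with hM₀def
  set U : Set (HermCoords n) :=
    {M | (∀ i, |M.1 i + (z + 1)| < δ) ∧ ∀ p, ‖M.2 p‖ < δ} with hUdef
  -- U is open
  have hUopen : IsOpen U := by
    have : U = (⋂ i, {M : HermCoords n | |M.1 i + (z + 1)| < δ}) ∩
        ⋂ p, {M : HermCoords n | ‖M.2 p‖ < δ} := by
      ext M; simp [hUdef, Set.mem_iInter]
    rw [this]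
    refine IsOpen.inter (isOpen_iInter_of_finite fun i => ?_)
      (isOpen_iInter_of_finite fun p => ?_)
    · exact isOpen_lt (Continuous.abs (((continuous_apply i).comp continuous_fst).add
        continuous_const)) continuous_const
    · exact isOpen_lt (continuous_norm.comp ((continuous_apply p).comp continuous_snd))
        continuous_const
  have hM₀U : M₀ ∈ U := by
    constructor
    · intro i
      show |(-(z + 1) : ℝ) + (z + 1)| < δ
      rw [neg_add_cancel, abs_zero]
      exact hδpos
    · intro p
      show ‖(0:ℂ)‖ < δ
      rw [norm_zero]
      exact hδpos
  -- U ⊆ S z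
  have hUsub : U ⊆ {M : HermCoords n | maxSpecLE M (-z)} := by
    intro M hM
    rw [Set.mem_setOf_eq, maxSpecLE_iff]
    intro i
    obtain ⟨v, hv1, hv2⟩ := exists_unit_eigvec M i
    have hsplit : matrixOf M = matrixOf M₀ + matrixOf (M - M₀) := by
      have hM' : M₀ + (M - M₀) = M := by abel
      rw [← matrixOf_add, hM']
    have hM₀mat : matrixOf M₀ = ((-(z + 1) : ℝ) : ℂ) • (1 : Matrix (Fin n) (Fin n) ℂ) := by
      ext i' j'
      rcases lt_trichotomy i' j' with h | h | h
      · rw [show matrixOf M₀ i' j' = M₀.2 ⟨(i', j'), h⟩ from dif_pos h]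
        simp [hM₀def, Matrix.one_apply_ne (ne_of_lt h)]
      · subst h
        rw [entry_diag]
        simp [hM₀def, Matrix.one_apply]
      · rw [show matrixOf M₀ i' j' = star (M₀.2 ⟨(j', i'), h⟩) from
          by rw [matrixOf, dif_neg (asymm h), dif_pos h]]
        simp [hM₀def, Matrix.one_apply_ne (ne_of_gt h).symm]
        exact Or.inr (Matrix.one_apply_ne (ne_of_gt h))
    have hent : ∀ i' j', ‖matrixOf (M - M₀) i' j'‖ ≤ δ := by
      intro i' j'
      rcases lt_trichotomy i' j' with h | h | h
      · rw [show matrixOf (M - M₀) i' j' = (M - M₀).2 ⟨(i', j'), h⟩ from dif_pos h]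
        have : (M - M₀).2 ⟨(i', j'), h⟩ = M.2 ⟨(i', j'), h⟩ := by
          simp [hM₀def, Prod.snd_sub]
        rw [this]
        exact (hM.2 _).le
      · subst h
        rw [entry_diag]
        have : (M - M₀).1 i' = M.1 i' + (z + 1) := by
          simp [hM₀def, Prod.fst_sub]; ring
        rw [this, Complex.norm_real, Real.norm_eq_abs]
        exact (hM.1 i').le
      · rw [show matrixOf (M - M₀) i' j' = star ((M - M₀).2 ⟨(j', i'), h⟩) from
          by rw [matrixOf, dif_neg (asymm h), dif_pos h]]
        rw [Complex.star_def, Complex.norm_conj]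
        have : (M - M₀).2 ⟨(j', i'), h⟩ = M.2 ⟨(j', i'), h⟩ := by
          simp [hM₀def, Prod.snd_sub]
        rw [this]
        exact (hM.2 _).le
    have hquad := abs_quad_le hδpos.le (M - M₀) hent v
    rw [hv1, mul_one] at hquad
    have hbase : (dotProduct (star v) (matrixOf M₀ *ᵥ v)).re = -(z + 1) := by
      rw [hM₀mat, Matrix.smul_mulVec, Matrix.one_mulVec, dotProduct_smul,
        star_dotProduct_self, hv1]
      simp
    have hsum : (dotProduct (star v) (matrixOf M *ᵥ v)).re =
        (dotProduct (star v) (matrixOf M₀ *ᵥ v)).re +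
        (dotProduct (star v) (matrixOf (M - M₀) *ᵥ v)).re := by
      rw [hsplit, Matrix.add_mulVec, dotProduct_add, Complex.add_re]
    rw [← hv2, hsum, hbase]
    have hδn : δ * n ≤ 1 := by
      rw [hδdef]
      rw [div_mul_eq_mul_div, one_mul, div_le_one (by positivity)]
      linarith
    linarith
  -- positivity
  have hUmeas : 0 < (volume : Measure (HermCoords n)) U := hUopen.measure_pos _ ⟨M₀, hM₀U⟩
  rw [Iz, MeasureTheory.integral_indicator (measurableSet_setLE _)]
  have hpos : 0 < ∫ M in U, eC c M := by
    rw [MeasureTheory.setIntegral_pos_iff_support_of_nonneg_ae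
      (Filter.Eventually.of_forall fun M => eC_nonneg c M)
      ((integrable_eC hc).integrableOn)]
    have hsupp : Function.support (eC c : HermCoords n → ℝ) = Set.univ := by
      ext M; simp [Function.support, eC, (Real.exp_pos _).ne']
    rw [hsupp, Set.univ_inter]
    exact hUmeas
  refine hpos.trans_le ?_
  exact MeasureTheory.setIntegral_mono_set ((integrable_eC hc).integrableOn)
    (Filter.Eventually.of_forall fun M => eC_nonneg c M)
    (HasSubset.Subset.eventuallyLE hUsub)
lemma continuous_eC (c : ℝ) : Continuous (eC c : HermCoords n → ℝ) :=
  Real.continuous_exp.comp ((continuous_const.mul continuous_qf).div_const 2)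

lemma Nint_nonneg [Nonempty (Fin n)] (c z a : ℝ) : 0 ≤ Nint n c z a := by
  refine integral_nonneg fun M₁ => Set.indicator_nonneg (fun M₁ _ => ?_) M₁
  refine mul_nonneg (Real.exp_pos _).le (integral_nonneg fun M₂ => ?_)
  exact Set.indicator_nonneg (fun M₂ _ => (Real.exp_pos _).le) M₂

lemma Nint_le [Nonempty (Fin n)] {c : ℝ} (hc0 : 0 ≤ c) (hc1 : c ^ 2 < 1) (z x : ℝ) :
    Nint n c z (x + z) ≤ tailInt n (x + z + c * z) * Iz n c z := by
  classical
  set T : ℝ := tailInt n (x + z + c * z) with hT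
  set f : HermCoords n → ℝ := fun M₁ =>
    Set.indicator {M : HermCoords n | maxSpecLE M (-z)}
      (fun M₁ => Real.exp (-(1 - c ^ 2) * reTr (matrixOf M₁ * matrixOf M₁) / 2) *
        ∫ M₂ : HermCoords n,
          Set.indicator {M : HermCoords n | maxSpecGE M (x + z)}
            (fun M₂ => Real.exp (-reTr ((matrixOf M₂ - (c : ℂ) • matrixOf M₁) *
              (matrixOf M₂ - (c : ℂ) • matrixOf M₁)) / 2)) M₂) M₁ with hf
  have hfnonneg : ∀ M₁, 0 ≤ f M₁ := fun M₁ =>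
    Set.indicator_nonneg (fun M₁ _ => mul_nonneg (Real.exp_pos _).le
      (integral_nonneg fun M₂ =>
        Set.indicator_nonneg (fun M₂ _ => (Real.exp_pos _).le) M₂)) M₁
  have hbound : ∀ M₁, f M₁ ≤ T * Set.indicator {M : HermCoords n | maxSpecLE M (-z)}
      (eC c) M₁ := by
    intro M₁
    rw [hf]
    simp only [Set.indicator_apply]
    split_ifs with h
    · rw [Set.mem_setOf_eq] at h
      calc Real.exp (-(1 - c ^ 2) * reTr (matrixOf M₁ * matrixOf M₁) / 2) *
            ∫ M₂ : HermCoords n,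
              Set.indicator {M : HermCoords n | maxSpecGE M (x + z)}
                (fun M₂ => Real.exp (-reTr ((matrixOf M₂ - (c : ℂ) • matrixOf M₁) *
                  (matrixOf M₂ - (c : ℂ) • matrixOf M₁)) / 2)) M₂ ≤
          Real.exp (-(1 - c ^ 2) * reTr (matrixOf M₁ * matrixOf M₁) / 2) * T := by
            exact mul_le_mul_of_nonneg_left (inner_tail_le hc0 (x + z) M₁ h)
              (Real.exp_pos _).le
        _ = T * eC c M₁ := mul_comm _ _
    · rw [mul_zero]
  -- strong measurability of f
  have hcontK : Continuous (fun q : HermCoords n × HermCoords n =>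
      Real.exp (-reTr ((matrixOf q.2 - (c : ℂ) • matrixOf q.1) *
        (matrixOf q.2 - (c : ℂ) • matrixOf q.1)) / 2)) := by
    have hc : Continuous (fun q : HermCoords n × HermCoords n =>
        matrixOf q.2 - (c : ℂ) • matrixOf q.1) :=
      (continuous_matrixOf.comp continuous_snd).sub
        ((continuous_matrixOf.comp continuous_fst).const_smul ((c : ℂ)))
    exact Real.continuous_exp.comp
      ((Complex.continuous_re.comp ((hc.matrix_mul hc).matrix_trace)).neg.div_const 2)
  have hK : StronglyMeasurable (fun q : HermCoords n × HermCoords n =>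
      Set.indicator {M : HermCoords n | maxSpecGE M (x + z)}
        (fun M₂ => Real.exp (-reTr ((matrixOf M₂ - (c : ℂ) • matrixOf q.1) *
          (matrixOf M₂ - (c : ℂ) • matrixOf q.1)) / 2)) q.2) := by
    have heq : (fun q : HermCoords n × HermCoords n =>
        Set.indicator {M : HermCoords n | maxSpecGE M (x + z)}
          (fun M₂ => Real.exp (-reTr ((matrixOf M₂ - (c : ℂ) • matrixOf q.1) *
            (matrixOf M₂ - (c : ℂ) • matrixOf q.1)) / 2)) q.2) =
        Set.indicator ((Set.univ : Set (HermCoords n)) ×ˢ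
            {M : HermCoords n | maxSpecGE M (x + z)})
          (fun q : HermCoords n × HermCoords n =>
            Real.exp (-reTr ((matrixOf q.2 - (c : ℂ) • matrixOf q.1) *
              (matrixOf q.2 - (c : ℂ) • matrixOf q.1)) / 2)) := by
      funext q
      rw [Set.indicator_apply, Set.indicator_apply]
      refine if_congr ?_ rfl rfl
      simp [Set.mem_prod]
    rw [heq]
    exact hcontK.stronglyMeasurable.indicator
      (MeasurableSet.univ.prod (measurableSet_setGE _))
  have hinner_sm : StronglyMeasurable (fun M₁ : HermCoords n =>
      ∫ M₂ : HermCoords n,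
        Set.indicator {M : HermCoords n | maxSpecGE M (x + z)}
          (fun M₂ => Real.exp (-reTr ((matrixOf M₂ - (c : ℂ) • matrixOf M₁) *
            (matrixOf M₂ - (c : ℂ) • matrixOf M₁)) / 2)) M₂) :=
    hK.integral_prod_right'
  have hf_sm : StronglyMeasurable f := by
    rw [hf]
    exact (((continuous_eC (n := n) c).stronglyMeasurable).mul hinner_sm).indicator
      (measurableSet_setLE _)
  have hRHSint : Integrable (fun M₁ : HermCoords n =>
      T * Set.indicator {M : HermCoords n | maxSpecLE M (-z)} (eC c) M₁) :=
    ((integrable_eC hc1).indicator (measurableSet_setLE _)).const_mul T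
  have hfint : Integrable f := by
    refine Integrable.mono' hRHSint hf_sm.aestronglyMeasurable ?_
    refine Filter.Eventually.of_forall fun M₁ => ?_
    rw [Real.norm_eq_abs, abs_of_nonneg (hfnonneg M₁)]
    exact hbound M₁
  have hmono := integral_mono hfint hRHSint hbound
  rw [MeasureTheory.integral_const_mul] at hmono
  exact hmono


end Dyson

open Dyson in
/-- **Nonexplosion for the Dyson process (Appendix).**  For the `n`-particle
Dyson Brownian motion, `P(λ_n(t) ≥ x + z | λ_n(0) ≤ −z) → 0` as `z → ∞`. -/
theorem dyson_nonexplosion (n : ℕ) (hn : 1 ≤ n) (c : ℝ) (hc0 : 0 < c) (hc1 : c < 1)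
    (x : ℝ) :
    Tendsto (fun z : ℝ => Nint n c z (x + z) / Dint n c z) atTop (𝓝 0) := by
  haveI : Nonempty (Fin n) := Fin.pos_iff_nonempty.mp hn
  have hc2 : c ^ 2 < 1 := by nlinarith
  have hGpos : 0 < ∫ Y : HermCoords n, gA Y := integral_gA_pos
  apply squeeze_zero (g := fun z : ℝ =>
    tailInt n (x + z + c * z) / ∫ Y : HermCoords n, gA Y)
  · intro z
    have hDpos : 0 < Dint n c z := by
      rw [Dint_eq c z]
      exact mul_pos hGpos (Iz_pos hc2 z)
    exact div_nonneg (Nint_nonneg (n := n) c z (x + z)) hDpos.le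
  · intro z
    have hD : Dint n c z = (∫ Y : HermCoords n, gA Y) * Iz n c z := Dint_eq c z
    have hDpos : 0 < Dint n c z := by rw [hD]; exact mul_pos hGpos (Iz_pos hc2 z)
    have hN := Nint_le (n := n) hc0.le hc2 z x
    rw [div_le_div_iff₀ hDpos hGpos, hD]
    calc Nint n c z (x + z) * ∫ Y : HermCoords n, gA Y ≤
        (tailInt n (x + z + c * z) * Iz n c z) * ∫ Y : HermCoords n, gA Y :=
          mul_le_mul_of_nonneg_right hN hGpos.le
      _ = tailInt n (x + z + c * z) * ((∫ Y : HermCoords n, gA Y) * Iz n c z) := by ring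
  · have haff : Tendsto (fun z : ℝ => x + z + c * z) atTop atTop := by
      have h0 : Tendsto (fun z : ℝ => (1 + c) * z) atTop atTop :=
        Filter.Tendsto.const_mul_atTop (by linarith) tendsto_id
      have h1 : Tendsto (fun z : ℝ => x + (1 + c) * z) atTop atTop :=
        tendsto_atTop_add_const_left _ x h0
      refine h1.congr fun z => by ring
    have h1 := (tendsto_tailInt (n := n)).comp haff
    have h2 := h1.div_const (∫ Y : HermCoords n, gA Y)
    simpa using h2




end
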